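/- Let L/F be a finite separable field extension and let S be a finite-dimensional F-subspace of L. If X is a k-fragment of S, then X* = (XS)^⊥, the orthogonal complement of XS with respect to the trace bilinear form (x,y) ↦ Tr_{L/F}(xy), is also a k-fragment of S. -/

import Mathlib

open Module Submodule

variable {F L : Type*} [Field F] [Field L] [Algebra F L]

/-- The boundary `∂_S X = dim(XS) - dim(X)` (as an integer). -/
noncomputable def deltaS (S X : Submodule F L) : ℤ :=
  (finrank F ↥(X * S) : ℤ) - finrank F ↥X

/-- Membership in the family `𝒳_k`: `k ≤ dim X < ∞` and `dim(XS) + k ≤ dim L`. -/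
def InXk (k : ℕ) (S X : Submodule F L) : Prop :=
  FiniteDimensional F ↥X ∧ k ≤ finrank F ↥X ∧
    ((finrank F ↥(X * S) + k : ℕ) : Cardinal) ≤ Module.rank F L

/-- A `k`-fragment of `S`: an element of `𝒳_k` attaining the minimum `κ_k(S)` of `∂_S`. -/
def IsFragment (k : ℕ) (S X : Submodule F L) : Prop :=
  InXk k S X ∧ ∀ Y : Submodule F L, InXk k S Y → deltaS S X ≤ deltaS S Y

/-- A `k`-atom of `S`: a `k`-fragment of minimum dimension. -/
def IsAtomk (k : ℕ) (S A : Submodule F L) : Prop :=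
  IsFragment k S A ∧ ∀ B : Submodule F L, IsFragment k S B → finrank F ↥A ≤ finrank F ↥B

theorem stmt4 [FiniteDimensional F L] [Algebra.IsSeparable F L]
    (S : Submodule F L) (k : ℕ) (X : Submodule F L)
    (hX : IsFragment k S X) :
    IsFragment k S ((Algebra.traceForm F L).orthogonal (X * S)) := by
  classical
  set B := Algebra.traceForm F L with hB
  have hnd : B.Nondegenerate := traceForm_nondegenerate F L
  have hrefl : B.IsRefl := (Algebra.traceForm_isSymm (R := F) (S := L)).isRefl
  set X' := B.orthogonal (X * S) with hX'
  set n := finrank F L with hn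
  -- basic dims
  have hdimX' : finrank F ↥X' = n - finrank F ↥(X * S) :=
    LinearMap.BilinForm.finrank_orthogonal hnd (X * S)
  have hXSle : finrank F ↥(X * S) ≤ n := Submodule.finrank_le _
  -- X'S ⊆ X^⊥
  have hsub : X' * S ≤ B.orthogonal X := by
    rw [Submodule.mul_le]
    intro u hu s hs
    rw [LinearMap.BilinForm.mem_orthogonal_iff]
    intro x hx
    have hxs : x * s ∈ X * S := Submodule.mul_mem_mul hx hs
    have := hu (x * s) hxs
    have : B (x * s) u = 0 := this
    show B x (u * s) = 0
    calc B x (u * s) = B (x * s) u := by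
          simp only [hB, Algebra.traceForm_apply]
          ring_nf
    _ = 0 := this
  have hX'Sle : finrank F ↥(X' * S) ≤ n - finrank F ↥X := by
    calc finrank F ↥(X' * S) ≤ finrank F ↥(B.orthogonal X) :=
          Submodule.finrank_mono hsub
    _ = n - finrank F ↥X := LinearMap.BilinForm.finrank_orthogonal hnd X
  -- facts from hX
  obtain ⟨⟨_, hkX, hXScard⟩, hmin⟩ := hX
  have hrankL : Module.rank F L = (n : Cardinal) := (finrank_eq_rank F L).symm
  have hXSk : finrank F ↥(X * S) + k ≤ n := by
    rw [hrankL] at hXScard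
    exact_mod_cast hXScard
  have hXleL : finrank F ↥X ≤ n := Submodule.finrank_le _
  -- X' ∈ 𝒳_k
  have hinX' : InXk k S X' := by
    refine ⟨inferInstance, ?_, ?_⟩
    · omega
    · rw [hrankL]
      have : finrank F ↥(X' * S) + k ≤ n := by omega
      exact_mod_cast this
  refine ⟨hinX', fun Y hY => ?_⟩
  have hXmin := hmin Y hY
  have hd : deltaS S X' ≤ deltaS S X := by
    unfold deltaS
    rw [hdimX']
    have h1 : (finrank F ↥(X' * S) : ℤ) ≤ (n : ℤ) - finrank F ↥X := by
      omega
    omega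
  exact hd.trans hXmin
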